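/- Let ℓ be a prime and suppose r₁, s₁, r₂, s₂ are (nonzero) powers of ℓ. Then |Ŝ_{r₁,s₁,r₂,s₂}(0, 0, 0, 0; D₁, D₂)| ≤ gcd(D₁, D₂) · (largest power of ℓ dividing lcm(D₁,D₂)) · r₂. -/

import Mathlib

open scoped BigOperators

/-- e(x) = exp(2πix). -/
noncomputable def e (x : ℝ) : ℂ := Complex.exp (2 * Real.pi * Complex.I * x)

/-- A choice of a pair `(Y, Z)` with `Y·b + Z·c ≡ 1 (mod D)`, when one exists. -/
noncomputable def YZ (D : ℕ) (b c : ℤ) : ℤ × ℤ :=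
  letI := Classical.propDecidable (∃ p : ℤ × ℤ, p.1 * b + p.2 * c ≡ 1 [ZMOD (D : ℤ)])
  if h : ∃ p : ℤ × ℤ, p.1 * b + p.2 * c ≡ 1 [ZMOD (D : ℤ)] then h.choose else (0, 0)

/-- The long Weyl element GL(3) Kloosterman sum
`S(n₁,m₂,m₁,n₂;D₁,D₂) = ∑ e((n₁B₁ + m₁(Y₁D₂ − Z₁B₂))/D₁ + (m₂B₂ + n₂(Y₂D₁ − Z₂B₁))/D₂)`,
where the sum runs over `B₁,C₁ mod D₁` and `B₂,C₂ mod D₂` with `gcd(B_j,C_j,D_j)=1` and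
`D₁C₂ + B₁B₂ + D₂C₁ ≡ 0 mod D₁D₂`, and `Y_jB_j + Z_jC_j ≡ 1 mod D_j`. -/
noncomputable def SKl (n₁ m₂ m₁ n₂ : ℤ) (D₁ D₂ : ℕ) : ℂ :=
  ∑ b₁ ∈ Finset.range D₁, ∑ c₁ ∈ Finset.range D₁,
    ∑ b₂ ∈ Finset.range D₂, ∑ c₂ ∈ Finset.range D₂,
      if Nat.gcd (Nat.gcd b₁ c₁) D₁ = 1 ∧ Nat.gcd (Nat.gcd b₂ c₂) D₂ = 1 ∧
          (D₁ : ℤ) * c₂ + (b₁ : ℤ) * b₂ + (D₂ : ℤ) * c₁ ≡ 0 [ZMOD ((D₁ : ℤ) * D₂)] then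
        e ((((n₁ * b₁ + m₁ * ((YZ D₁ (b₁ : ℤ) (c₁ : ℤ)).1 * D₂
                - (YZ D₁ (b₁ : ℤ) (c₁ : ℤ)).2 * b₂) : ℤ)) : ℝ) / (D₁ : ℝ)
          + (((m₂ * b₂ + n₂ * ((YZ D₂ (b₂ : ℤ) (c₂ : ℤ)).1 * D₁
                - (YZ D₂ (b₂ : ℤ) (c₂ : ℤ)).2 * b₁) : ℤ)) : ℝ) / (D₂ : ℝ))
      else 0

/-- The normalized Fourier transform of the long Weyl element Kloosterman sum:
`Ŝ_{r₁,s₁,r₂,s₂}(x₁,y₁,x₂,y₂;D₁,D₂) = (1/(D₁²D₂²)) ∑_{n₁,m₁ mod D₁} ∑_{n₂,m₂ mod D₂}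
  S(n₁r₁, m₂r₂, m₁s₁, n₂s₂; D₁,D₂) e(−(x₁m₁+y₁n₁)/D₁ − (x₂m₂+y₂n₂)/D₂)`. -/
noncomputable def Shat (r₁ s₁ r₂ s₂ x₁ y₁ x₂ y₂ : ℤ) (D₁ D₂ : ℕ) : ℂ :=
  (1 / ((D₁ : ℂ) ^ 2 * (D₂ : ℂ) ^ 2)) *
    ∑ n₁ ∈ Finset.range D₁, ∑ m₁ ∈ Finset.range D₁,
      ∑ n₂ ∈ Finset.range D₂, ∑ m₂ ∈ Finset.range D₂,
        SKl ((n₁ : ℤ) * r₁) ((m₂ : ℤ) * r₂) ((m₁ : ℤ) * s₁) ((n₂ : ℤ) * s₂) D₁ D₂ *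
          e (-(((x₁ * (m₁ : ℤ) + y₁ * (n₁ : ℤ) : ℤ) : ℝ) / (D₁ : ℝ))
            - ((x₂ * (m₂ : ℤ) + y₂ * (n₂ : ℤ) : ℤ) : ℝ) / (D₂ : ℝ))



lemma e_add (x y : ℝ) : e (x + y) = e x * e y := by
  simp [e, ← Complex.exp_add]; ring_nf

lemma e_int (a : ℤ) : e a = 1 := by
  simp [e]
  rw [show 2 * (Real.pi:ℂ) * Complex.I * a = a * (2 * Real.pi * Complex.I) by ring]
  exact Complex.exp_int_mul_two_pi_mul_I a

lemma e_zero : e 0 = 1 := by simpa using e_int 0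

lemma e_eq_one_iff (a : ℤ) (D : ℕ) (hD : 0 < D) : e ((a : ℝ) / D) = 1 ↔ (D:ℤ) ∣ a := by
  have hDc : (D:ℂ) ≠ 0 := Nat.cast_ne_zero.mpr hD.ne'
  constructor
  · intro h
    rw [e, Complex.exp_eq_one_iff] at h
    obtain ⟨n, hn⟩ := h
    have hπ : (2 * (Real.pi:ℂ) * Complex.I) ≠ 0 := by
      simp [Real.pi_ne_zero, Complex.I_ne_zero]
    field_simp at hn
    have h2 : (2*(Real.pi:ℂ)*Complex.I) * a = (2*(Real.pi:ℂ)*Complex.I) * (n*D) := by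
      rw [← hn]; push_cast; rw [div_mul_cancel₀ _ hDc]
    have h3 : (a:ℂ) = ((n*D : ℤ) : ℂ) := by
      have := mul_left_cancel₀ hπ h2
      push_cast
      exact this
    have h4 : a = n * D := by exact_mod_cast h3
    exact ⟨n, by rw [h4]; ring⟩
  · intro ⟨k, hk⟩
    have h5 : ((a:ℝ)/D) = (k:ℝ) := by
      rw [hk]; push_cast
      field_simp
    rw [h5]
    exact_mod_cast e_int k

lemma e_pow (x : ℝ) (n : ℕ) : e x ^ n = e (n * x) := by
  rw [e, e, ← Complex.exp_nat_mul]; push_cast; ring_nf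

lemma e_sum (D : ℕ) (hD : 0 < D) (a : ℤ) :
    ∑ n ∈ Finset.range D, e (((n : ℤ) * a : ℤ) / (D:ℝ)) = if (D:ℤ) ∣ a then (D:ℂ) else 0 := by
  have key : ∀ n : ℕ, e (((n : ℤ) * a : ℤ) / (D:ℝ)) = e ((a:ℝ)/D) ^ n := by
    intro n
    rw [e_pow]
    congr 1
    push_cast
    ring
  simp only [key]
  by_cases h : (D:ℤ) ∣ a
  · rw [if_pos h]
    have h1 : e ((a:ℝ)/D) = 1 := (e_eq_one_iff a D hD).mpr h
    simp [h1]
  · rw [if_neg h]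
    have h1 : e ((a:ℝ)/D) ≠ 1 := fun hc => h ((e_eq_one_iff a D hD).mp hc)
    rw [geom_sum_eq h1]
    have h2 : e ((a:ℝ)/D) ^ D = 1 := by
      rw [e_pow]
      have : (D:ℝ) * ((a:ℝ)/D) = (a:ℝ) := by field_simp
      rw [this]
      exact_mod_cast e_int a
    simp [h2]

lemma count_dvd (D r : ℕ) (hD : 0 < D) :
    ((Finset.range D).filter (fun b : ℕ => (D:ℤ) ∣ (r:ℤ) * (b:ℤ))).card ≤ Nat.gcd r D := by
  set g := Nat.gcd r D with hg
  have hg0 : 0 < g := Nat.gcd_pos_of_pos_right r hD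
  set q := D / g with hq
  have hqg : q * g = D := Nat.div_mul_cancel (Nat.gcd_dvd_right r D)
  have hq0 : 0 < q := by
    rcases Nat.eq_zero_or_pos q with h | h
    · rw [h] at hqg; omega
    · exact h
  refine le_trans (Finset.card_le_card_of_injOn (fun b => b / q) ?_ ?_)
    (le_of_eq (Finset.card_range g))
  · intro b hb
    simp only [Finset.mem_coe, Finset.mem_filter, Finset.mem_range] at hb ⊢
    rw [Nat.div_lt_iff_lt_mul hq0, mul_comm]
    omega
  · have key : ∀ x : ℕ, x ∈ (Finset.range D).filter (fun b : ℕ => (D:ℤ) ∣ (r:ℤ) * (b:ℤ)) → q ∣ x := by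
      intro x hx
      simp only [Finset.mem_filter, Finset.mem_range] at hx
      have hx' : D ∣ r * x := by exact_mod_cast hx.2
      have hr' : (r/g) * g = r := Nat.div_mul_cancel (Nat.gcd_dvd_left r D)
      have h2 : q * g ∣ (r/g) * x * g := by
        rw [hqg, mul_right_comm, hr']
        exact hx'
      have h1 : q ∣ (r/g) * x := (Nat.mul_dvd_mul_iff_right hg0).mp h2
      have hco : Nat.Coprime (r/g) q := Nat.coprime_div_gcd_div_gcd hg0
      exact hco.symm.dvd_of_dvd_mul_left h1
    intro b hb b' hb' hdiv
    have hb1 := key b hb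
    have hb2 := key b' hb'
    have e1 : b = q * (b / q) := (Nat.mul_div_cancel' hb1).symm
    rw [e1]
    simp only at hdiv
    rw [hdiv, Nat.mul_div_cancel' hb2]

lemma count_pair (D₁ D₂ : ℕ) (hD₁ : 0 < D₁) (hD₂ : 0 < D₂) (t : ℤ) :
    ((Finset.range D₁ ×ˢ Finset.range D₂).filter
      (fun p => (D₁:ℤ) * p.2 + t + (D₂:ℤ) * p.1 ≡ 0 [ZMOD ((D₁:ℤ) * D₂)])).card
      ≤ Nat.gcd D₁ D₂ := by
  set g := Nat.gcd D₁ D₂ with hg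
  have hg0 : 0 < g := Nat.gcd_pos_of_pos_right D₁ hD₂
  set q := D₁ / g with hq
  have hqg : q * g = D₁ := Nat.div_mul_cancel (Nat.gcd_dvd_left D₁ D₂)
  have hq0 : 0 < q := by
    rcases Nat.eq_zero_or_pos q with h | h
    · rw [h] at hqg; omega
    · exact h
  set q₂ := D₂ / g with hq₂
  have hqg₂ : q₂ * g = D₂ := Nat.div_mul_cancel (Nat.gcd_dvd_right D₁ D₂)
  have hco : Nat.Coprime q q₂ := Nat.coprime_div_gcd_div_gcd hg0
  refine le_trans (Finset.card_le_card_of_injOn (fun p => p.1 / q) ?_ ?_)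
    (le_of_eq (Finset.card_range g))
  · intro p hp
    simp only [Finset.mem_coe, Finset.mem_filter, Finset.mem_product, Finset.mem_range] at hp
    simp only [Finset.mem_coe, Finset.mem_range]
    rw [Nat.div_lt_iff_lt_mul hq0, mul_comm]
    omega
  · intro p hp p' hp' hdiv
    simp only [Finset.mem_coe, Finset.mem_filter, Finset.mem_product, Finset.mem_range] at hp hp'
    obtain ⟨⟨hp1, hp2⟩, hpc⟩ := hp
    obtain ⟨⟨hp1', hp2'⟩, hpc'⟩ := hp'
    have hsub : ((D₁:ℤ) * D₂) ∣ ((D₁:ℤ) * ((p.2:ℤ) - (p'.2:ℤ)) + (D₂:ℤ) * ((p.1:ℤ) - (p'.1:ℤ))) := by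
      have h := (Int.ModEq.sub hpc hpc')
      simp only [sub_zero] at h
      have h2 := (Int.modEq_zero_iff_dvd).mp (h.trans (Int.ModEq.refl 0))
      have heq : ((D₁:ℤ) * p.2 + t + (D₂:ℤ) * p.1) - ((D₁:ℤ) * p'.2 + t + (D₂:ℤ) * p'.1)
          = (D₁:ℤ) * ((p.2:ℤ) - (p'.2:ℤ)) + (D₂:ℤ) * ((p.1:ℤ) - (p'.1:ℤ)) := by ring
      rwa [heq] at h2
    have h₁ : (D₁:ℤ) ∣ (D₂:ℤ) * ((p.1:ℤ) - (p'.1:ℤ)) := by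
      have hD₁dvd : (D₁:ℤ) ∣ (D₁:ℤ) * D₂ := Dvd.intro _ rfl
      have := dvd_trans hD₁dvd hsub
      exact (dvd_add_right (Dvd.intro _ rfl)).mp this
    have hqx : (q:ℤ) ∣ ((p.1:ℤ) - (p'.1:ℤ)) := by
      have hD₁' : (D₁:ℤ) = (g:ℤ) * q := by exact_mod_cast (by rw [mul_comm] at hqg; exact hqg.symm)
      have hD₂' : (D₂:ℤ) = (g:ℤ) * q₂ := by exact_mod_cast (by rw [mul_comm] at hqg₂; exact hqg₂.symm)
      rw [hD₁', hD₂'] at h₁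
      have hgz : (g:ℤ) ≠ 0 := by exact_mod_cast hg0.ne'
      have h3 : (q:ℤ) ∣ (q₂:ℤ) * ((p.1:ℤ) - (p'.1:ℤ)) := by
        rw [mul_assoc] at h₁
        exact (mul_dvd_mul_iff_left hgz).mp h₁
      have hcoZ : IsCoprime (q:ℤ) (q₂:ℤ) := by
        rw [Int.isCoprime_iff_gcd_eq_one]
        exact_mod_cast hco
      exact hcoZ.dvd_of_dvd_mul_left h3
    have hmod : p.1 % q = p'.1 % q := by
      have hmeq : p'.1 ≡ p.1 [MOD q] := (Nat.modEq_iff_dvd).mpr hqx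
      exact hmeq.symm
    have hdiv' : p.1 / q = p'.1 / q := hdiv
    have hfst : p.1 = p'.1 := by
      rw [← Nat.div_add_mod p.1 q, ← Nat.div_add_mod p'.1 q, hdiv', hmod]
    have h₂ : (D₂:ℤ) ∣ ((p.2:ℤ) - (p'.2:ℤ)) := by
      rw [hfst] at hsub
      simp only [sub_self, mul_zero, add_zero] at hsub
      have hD₁z : (D₁:ℤ) ≠ 0 := by exact_mod_cast hD₁.ne'
      exact (mul_dvd_mul_iff_left hD₁z).mp hsub
    have hsnd : p.2 = p'.2 := by
      have hmeq : p'.2 ≡ p.2 [MOD D₂] := (Nat.modEq_iff_dvd).mpr h₂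
      have hmeq' := hmeq.symm
      rw [Nat.ModEq] at hmeq'
      rwa [Nat.mod_eq_of_lt hp2, Nat.mod_eq_of_lt hp2'] at hmeq'
    exact Prod.ext hfst hsnd

lemma sum_prod4 {M : Type*} [AddCommMonoid M] (s t u v : Finset ℕ) (f : ℕ → ℕ → ℕ → ℕ → M) :
    ∑ p ∈ s ×ˢ t ×ˢ u ×ˢ v, f p.1 p.2.1 p.2.2.1 p.2.2.2
      = ∑ a ∈ s, ∑ b ∈ t, ∑ c ∈ u, ∑ d ∈ v, f a b c d := by
  rw [Finset.sum_product]
  refine Finset.sum_congr rfl fun a _ => ?_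
  rw [Finset.sum_product]
  refine Finset.sum_congr rfl fun b _ => ?_
  rw [Finset.sum_product]

lemma sum_swap44 {M : Type*} [AddCommMonoid M] (s t u v s' t' u' v' : Finset ℕ)
    (F : ℕ → ℕ → ℕ → ℕ → ℕ → ℕ → ℕ → ℕ → M) :
    (∑ a ∈ s, ∑ b ∈ t, ∑ c ∈ u, ∑ d ∈ v,
      ∑ a' ∈ s', ∑ b' ∈ t', ∑ c' ∈ u', ∑ d' ∈ v', F a b c d a' b' c' d')
    = ∑ a' ∈ s', ∑ b' ∈ t', ∑ c' ∈ u', ∑ d' ∈ v',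
        ∑ a ∈ s, ∑ b ∈ t, ∑ c ∈ u, ∑ d ∈ v, F a b c d a' b' c' d' := by
  simp only [← sum_prod4]
  exact Finset.sum_comm

lemma sum_factor4 (s t u v : Finset ℕ) (f g h k : ℕ → ℂ) :
    ∑ a ∈ s, ∑ b ∈ t, ∑ c ∈ u, ∑ d ∈ v, f a * g b * h c * k d
      = (∑ a ∈ s, f a) * (∑ b ∈ t, g b) * (∑ c ∈ u, h c) * (∑ d ∈ v, k d) := by
  simp only [← Finset.sum_mul, ← Finset.mul_sum]

lemma ite_and3 (P Q R : Prop) [Decidable P] [Decidable Q] [Decidable R] :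
    (if (P ∧ Q ∧ R) then (1:ℝ) else 0)
      = (if P then (1:ℝ) else 0) * ((if Q then (1:ℝ) else 0) * (if R then (1:ℝ) else 0)) := by
  by_cases hP : P <;> by_cases hQ : Q <;> by_cases hR : R <;> simp [hP, hQ, hR]

lemma abs_ite_le (P : Prop) [Decidable P] (D : ℕ) :
    ‖(if P then (D:ℂ) else 0)‖ ≤ (D:ℝ) := by
  by_cases h : P <;> simp [h]

lemma Shat_zero (r₁ s₁ r₂ s₂ : ℤ) (D₁ D₂ : ℕ) (hD₁ : 0 < D₁) (hD₂ : 0 < D₂) :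
    Shat r₁ s₁ r₂ s₂ 0 0 0 0 D₁ D₂ =
    (1 / ((D₁:ℂ)^2 * (D₂:ℂ)^2)) *
      ∑ b₁ ∈ Finset.range D₁, ∑ c₁ ∈ Finset.range D₁,
        ∑ b₂ ∈ Finset.range D₂, ∑ c₂ ∈ Finset.range D₂,
          if Nat.gcd (Nat.gcd b₁ c₁) D₁ = 1 ∧ Nat.gcd (Nat.gcd b₂ c₂) D₂ = 1 ∧
              (D₁ : ℤ) * c₂ + (b₁ : ℤ) * b₂ + (D₂ : ℤ) * c₁ ≡ 0 [ZMOD ((D₁ : ℤ) * D₂)] then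
            (if (D₁:ℤ) ∣ r₁ * (b₁:ℤ) then (D₁:ℂ) else 0) *
            (if (D₁:ℤ) ∣ s₁ * ((YZ D₁ (b₁:ℤ) (c₁:ℤ)).1 * D₂ - (YZ D₁ (b₁:ℤ) (c₁:ℤ)).2 * (b₂:ℤ))
              then (D₁:ℂ) else 0) *
            (if (D₂:ℤ) ∣ s₂ * ((YZ D₂ (b₂:ℤ) (c₂:ℤ)).1 * D₁ - (YZ D₂ (b₂:ℤ) (c₂:ℤ)).2 * (b₁:ℤ))
              then (D₂:ℂ) else 0) *
            (if (D₂:ℤ) ∣ r₂ * (b₂:ℤ) then (D₂:ℂ) else 0)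
          else 0 := by
  unfold Shat
  congr 1
  simp only [zero_mul, add_zero, Int.cast_zero, zero_div, neg_zero, sub_zero, e_zero, mul_one]
  unfold SKl
  rw [sum_swap44]
  refine Finset.sum_congr rfl fun b₁ _ => ?_
  refine Finset.sum_congr rfl fun c₁ _ => ?_
  refine Finset.sum_congr rfl fun b₂ _ => ?_
  refine Finset.sum_congr rfl fun c₂ _ => ?_
  by_cases hind : Nat.gcd (Nat.gcd b₁ c₁) D₁ = 1 ∧ Nat.gcd (Nat.gcd b₂ c₂) D₂ = 1 ∧
      (D₁ : ℤ) * c₂ + (b₁ : ℤ) * b₂ + (D₂ : ℤ) * c₁ ≡ 0 [ZMOD ((D₁ : ℤ) * D₂)]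
  · simp only [if_pos hind]
    have harg : ∀ n₁ m₁ n₂ m₂ : ℕ,
        e ((((((n₁:ℤ) * r₁) * b₁ + ((m₁:ℤ) * s₁) * ((YZ D₁ (b₁:ℤ) (c₁:ℤ)).1 * D₂
                - (YZ D₁ (b₁:ℤ) (c₁:ℤ)).2 * b₂) : ℤ)) : ℝ) / (D₁ : ℝ)
          + (((((m₂:ℤ) * r₂) * b₂ + ((n₂:ℤ) * s₂) * ((YZ D₂ (b₂:ℤ) (c₂:ℤ)).1 * D₁
                - (YZ D₂ (b₂:ℤ) (c₂:ℤ)).2 * b₁) : ℤ)) : ℝ) / (D₂ : ℝ))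
        = e ((((n₁:ℤ) * (r₁ * (b₁:ℤ)) : ℤ) : ℝ) / (D₁:ℝ))
          * e ((((m₁:ℤ) * (s₁ * ((YZ D₁ (b₁:ℤ) (c₁:ℤ)).1 * D₂
                - (YZ D₁ (b₁:ℤ) (c₁:ℤ)).2 * (b₂:ℤ))) : ℤ) : ℝ) / (D₁:ℝ))
          * e ((((n₂:ℤ) * (s₂ * ((YZ D₂ (b₂:ℤ) (c₂:ℤ)).1 * D₁
                - (YZ D₂ (b₂:ℤ) (c₂:ℤ)).2 * (b₁:ℤ))) : ℤ) : ℝ) / (D₂:ℝ))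
          * e ((((m₂:ℤ) * (r₂ * (b₂:ℤ)) : ℤ) : ℝ) / (D₂:ℝ)) := by
      intro n₁ m₁ n₂ m₂
      rw [← e_add, ← e_add, ← e_add]
      congr 1
      push_cast
      ring
    simp only [harg]
    rw [sum_factor4]
    rw [e_sum D₁ hD₁, e_sum D₁ hD₁, e_sum D₂ hD₂, e_sum D₂ hD₂]
  · simp only [if_neg hind, Finset.sum_const_zero]

theorem shat_prime_power_bound (ℓ : ℕ) (hℓ : ℓ.Prime) (r₁ s₁ r₂ s₂ : ℕ)
    (hr₁ : ∃ k : ℕ, r₁ = ℓ ^ k) (hs₁ : ∃ k : ℕ, s₁ = ℓ ^ k)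
    (hr₂ : ∃ k : ℕ, r₂ = ℓ ^ k) (hs₂ : ∃ k : ℕ, s₂ = ℓ ^ k)
    (D₁ D₂ : ℕ) (hD₁ : 0 < D₁) (hD₂ : 0 < D₂) :
    ‖Shat (r₁ : ℤ) (s₁ : ℤ) (r₂ : ℤ) (s₂ : ℤ) 0 0 0 0 D₁ D₂‖
      ≤ (Nat.gcd D₁ D₂ : ℝ) * ((ℓ ^ ((Nat.lcm D₁ D₂).factorization ℓ) : ℕ) : ℝ) * (r₂ : ℝ) := by
  obtain ⟨k₁, hk₁⟩ := hr₁
  obtain ⟨k₂, hk₂⟩ := hr₂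
  have hr₁pos : 0 < r₁ := hk₁ ▸ pow_pos hℓ.pos k₁
  have hr₂pos : 0 < r₂ := hk₂ ▸ pow_pos hℓ.pos k₂
  set v := (Nat.lcm D₁ D₂).factorization ℓ with hv
  set gD : ℕ := Nat.gcd D₁ D₂ with hgD
  set L : ℕ := ℓ ^ v with hL
  -- gcd r₁ D₁ ≤ L
  have hgcdL : Nat.gcd r₁ D₁ ≤ L := by
    obtain ⟨j, hj, hgj⟩ := (Nat.dvd_prime_pow hℓ).mp (hk₁ ▸ Nat.gcd_dvd_left r₁ D₁ : Nat.gcd r₁ D₁ ∣ ℓ ^ k₁)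
    have hlcm_ne : Nat.lcm D₁ D₂ ≠ 0 := Nat.lcm_ne_zero hD₁.ne' hD₂.ne'
    have hdvd : ℓ ^ j ∣ Nat.lcm D₁ D₂ :=
      dvd_trans (hgj ▸ Nat.gcd_dvd_right r₁ D₁) (Nat.dvd_lcm_left D₁ D₂)
    have hjv : j ≤ v := (Nat.Prime.pow_dvd_iff_le_factorization hℓ hlcm_ne).mp hdvd
    rw [hgj, hL]
    exact Nat.pow_le_pow_right hℓ.pos hjv
  rw [Shat_zero _ _ _ _ _ _ hD₁ hD₂, norm_mul]
  have habs1 : ‖(1 / ((D₁:ℂ)^2 * (D₂:ℂ)^2))‖ = 1 / ((D₁:ℝ)^2 * (D₂:ℝ)^2) := by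
    rw [norm_div, norm_one, norm_mul, norm_pow, norm_pow, Complex.norm_natCast, Complex.norm_natCast]
  rw [habs1]
  set N : ℝ := ∑ b₁ ∈ Finset.range D₁, ∑ c₁ ∈ Finset.range D₁,
      ∑ b₂ ∈ Finset.range D₂, ∑ c₂ ∈ Finset.range D₂,
        (if ((D₁:ℤ) ∣ (r₁:ℤ) * (b₁:ℤ) ∧ (D₂:ℤ) ∣ (r₂:ℤ) * (b₂:ℤ) ∧
            (D₁ : ℤ) * c₂ + (b₁ : ℤ) * b₂ + (D₂ : ℤ) * c₁ ≡ 0 [ZMOD ((D₁ : ℤ) * D₂)])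
          then (1:ℝ) else 0) with hN
  have hCpos : (0:ℝ) < (D₁:ℝ)^2 * (D₂:ℝ)^2 := by positivity
  -- step 1 : abs of sum bounded by C * N
  have step1 : ‖(∑ b₁ ∈ Finset.range D₁, ∑ c₁ ∈ Finset.range D₁,
        ∑ b₂ ∈ Finset.range D₂, ∑ c₂ ∈ Finset.range D₂,
          if Nat.gcd (Nat.gcd b₁ c₁) D₁ = 1 ∧ Nat.gcd (Nat.gcd b₂ c₂) D₂ = 1 ∧
              (D₁ : ℤ) * c₂ + (b₁ : ℤ) * b₂ + (D₂ : ℤ) * c₁ ≡ 0 [ZMOD ((D₁ : ℤ) * D₂)] then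
            (if (D₁:ℤ) ∣ (r₁:ℤ) * (b₁:ℤ) then (D₁:ℂ) else 0) *
            (if (D₁:ℤ) ∣ (s₁:ℤ) * ((YZ D₁ (b₁:ℤ) (c₁:ℤ)).1 * D₂ - (YZ D₁ (b₁:ℤ) (c₁:ℤ)).2 * (b₂:ℤ))
              then (D₁:ℂ) else 0) *
            (if (D₂:ℤ) ∣ (s₂:ℤ) * ((YZ D₂ (b₂:ℤ) (c₂:ℤ)).1 * D₁ - (YZ D₂ (b₂:ℤ) (c₂:ℤ)).2 * (b₁:ℤ))
              then (D₂:ℂ) else 0) *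
            (if (D₂:ℤ) ∣ (r₂:ℤ) * (b₂:ℤ) then (D₂:ℂ) else 0)
          else 0)‖
      ≤ ((D₁:ℝ)^2 * (D₂:ℝ)^2) * N := by
    rw [hN]
    simp only [Finset.mul_sum]
    refine le_trans (norm_sum_le _ _) (Finset.sum_le_sum fun b₁ _ => ?_)
    refine le_trans (norm_sum_le _ _) (Finset.sum_le_sum fun c₁ _ => ?_)
    refine le_trans (norm_sum_le _ _) (Finset.sum_le_sum fun b₂ _ => ?_)
    refine le_trans (norm_sum_le _ _) (Finset.sum_le_sum fun c₂ _ => ?_)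
    by_cases hind : Nat.gcd (Nat.gcd b₁ c₁) D₁ = 1 ∧ Nat.gcd (Nat.gcd b₂ c₂) D₂ = 1 ∧
        (D₁ : ℤ) * c₂ + (b₁ : ℤ) * b₂ + (D₂ : ℤ) * c₁ ≡ 0 [ZMOD ((D₁ : ℤ) * D₂)]
    · rw [if_pos hind]
      by_cases h1 : (D₁:ℤ) ∣ (r₁:ℤ) * (b₁:ℤ)
      · by_cases h2 : (D₂:ℤ) ∣ (r₂:ℤ) * (b₂:ℤ)
        · have hχ : (if ((D₁:ℤ) ∣ (r₁:ℤ) * (b₁:ℤ) ∧ (D₂:ℤ) ∣ (r₂:ℤ) * (b₂:ℤ) ∧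
              (D₁ : ℤ) * c₂ + (b₁ : ℤ) * b₂ + (D₂ : ℤ) * c₁ ≡ 0 [ZMOD ((D₁ : ℤ) * D₂)])
                then (1:ℝ) else 0) = 1 := if_pos ⟨h1, h2, hind.2.2⟩
          rw [hχ, mul_one, norm_mul, norm_mul, norm_mul]
          calc ‖_‖ * ‖_‖ * ‖_‖ * ‖_‖
              ≤ (D₁:ℝ) * (D₁:ℝ) * (D₂:ℝ) * (D₂:ℝ) := by
                gcongr <;> first
                  | exact abs_ite_le _ _
                  | positivity
            _ = (D₁:ℝ)^2 * (D₂:ℝ)^2 := by ring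
        · rw [if_neg h2, mul_zero, norm_zero]
          exact mul_nonneg (by positivity) (by split_ifs <;> norm_num)
      · rw [if_neg h1, zero_mul, zero_mul, zero_mul, norm_zero]
        exact mul_nonneg (by positivity) (by split_ifs <;> norm_num)
    · rw [if_neg hind, norm_zero]
      exact mul_nonneg (by positivity) (by split_ifs <;> norm_num)
  -- step 2 : N ≤ L * (r₂ * gD)
  have hKbound : ∀ b₁ b₂ : ℕ,
      (∑ c₁ ∈ Finset.range D₁, ∑ c₂ ∈ Finset.range D₂,
        (if ((D₁ : ℤ) * c₂ + (b₁ : ℤ) * b₂ + (D₂ : ℤ) * c₁ ≡ 0 [ZMOD ((D₁ : ℤ) * D₂)])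
          then (1:ℝ) else 0)) ≤ (gD : ℝ) := by
    intro b₁ b₂
    rw [← Finset.sum_product', Finset.sum_boole]
    exact_mod_cast count_pair D₁ D₂ hD₁ hD₂ ((b₁:ℤ) * (b₂:ℤ))
  have hQbound : (∑ b₂ ∈ Finset.range D₂,
      (if (D₂:ℤ) ∣ (r₂:ℤ) * (b₂:ℤ) then (1:ℝ) else 0)) ≤ (r₂ : ℝ) := by
    rw [Finset.sum_boole]
    exact_mod_cast le_trans (count_dvd D₂ r₂ hD₂) (Nat.gcd_le_left D₂ hr₂pos)
  have hPbound : (∑ b₁ ∈ Finset.range D₁,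
      (if (D₁:ℤ) ∣ (r₁:ℤ) * (b₁:ℤ) then (1:ℝ) else 0)) ≤ (L : ℝ) := by
    rw [Finset.sum_boole]
    exact_mod_cast le_trans (count_dvd D₁ r₁ hD₁) hgcdL
  have step2 : N ≤ (L:ℝ) * ((r₂:ℝ) * (gD:ℝ)) := by
    rw [hN]
    simp only [ite_and3]
    simp only [← Finset.mul_sum]
    calc ∑ b₁ ∈ Finset.range D₁, (if (D₁:ℤ) ∣ (r₁:ℤ) * (b₁:ℤ) then (1:ℝ) else 0) *
          (∑ c₁ ∈ Finset.range D₁, ∑ b₂ ∈ Finset.range D₂,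
            (if (D₂:ℤ) ∣ (r₂:ℤ) * (b₂:ℤ) then (1:ℝ) else 0) *
            ∑ c₂ ∈ Finset.range D₂,
              (if ((D₁ : ℤ) * c₂ + (b₁ : ℤ) * b₂ + (D₂ : ℤ) * c₁ ≡ 0 [ZMOD ((D₁ : ℤ) * D₂)])
                then (1:ℝ) else 0))
        ≤ ∑ b₁ ∈ Finset.range D₁, (if (D₁:ℤ) ∣ (r₁:ℤ) * (b₁:ℤ) then (1:ℝ) else 0) *
            ((r₂:ℝ) * (gD:ℝ)) := by
          refine Finset.sum_le_sum fun b₁ _ => ?_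
          refine mul_le_mul_of_nonneg_left ?_ (by positivity)
          rw [Finset.sum_comm]
          calc ∑ b₂ ∈ Finset.range D₂, ∑ c₁ ∈ Finset.range D₁,
                (if (D₂:ℤ) ∣ (r₂:ℤ) * (b₂:ℤ) then (1:ℝ) else 0) *
                ∑ c₂ ∈ Finset.range D₂,
                  (if ((D₁ : ℤ) * c₂ + (b₁ : ℤ) * b₂ + (D₂ : ℤ) * c₁ ≡ 0 [ZMOD ((D₁ : ℤ) * D₂)])
                    then (1:ℝ) else 0)
              = ∑ b₂ ∈ Finset.range D₂, (if (D₂:ℤ) ∣ (r₂:ℤ) * (b₂:ℤ) then (1:ℝ) else 0) *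
                  ∑ c₁ ∈ Finset.range D₁, ∑ c₂ ∈ Finset.range D₂,
                    (if ((D₁ : ℤ) * c₂ + (b₁ : ℤ) * b₂ + (D₂ : ℤ) * c₁ ≡ 0 [ZMOD ((D₁ : ℤ) * D₂)])
                      then (1:ℝ) else 0) := by
                refine Finset.sum_congr rfl fun b₂ _ => ?_
                rw [Finset.mul_sum]
            _ ≤ ∑ b₂ ∈ Finset.range D₂, (if (D₂:ℤ) ∣ (r₂:ℤ) * (b₂:ℤ) then (1:ℝ) else 0) * (gD:ℝ) := by
                refine Finset.sum_le_sum fun b₂ _ => ?_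
                exact mul_le_mul_of_nonneg_left (hKbound b₁ b₂) (by positivity)
            _ = (∑ b₂ ∈ Finset.range D₂, (if (D₂:ℤ) ∣ (r₂:ℤ) * (b₂:ℤ) then (1:ℝ) else 0)) * (gD:ℝ) := by
                rw [Finset.sum_mul]
            _ ≤ (r₂:ℝ) * (gD:ℝ) := mul_le_mul_of_nonneg_right hQbound (by positivity)
      _ = (∑ b₁ ∈ Finset.range D₁, (if (D₁:ℤ) ∣ (r₁:ℤ) * (b₁:ℤ) then (1:ℝ) else 0)) *
            ((r₂:ℝ) * (gD:ℝ)) := by rw [Finset.sum_mul]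
      _ ≤ (L:ℝ) * ((r₂:ℝ) * (gD:ℝ)) :=
          mul_le_mul_of_nonneg_right hPbound (by positivity)
  calc (1 / ((D₁:ℝ)^2 * (D₂:ℝ)^2)) * ‖_‖
      ≤ (1 / ((D₁:ℝ)^2 * (D₂:ℝ)^2)) * (((D₁:ℝ)^2 * (D₂:ℝ)^2) * N) :=
        mul_le_mul_of_nonneg_left step1 (by positivity)
    _ = N := by field_simp
    _ ≤ (L:ℝ) * ((r₂:ℝ) * (gD:ℝ)) := step2
    _ = (gD : ℝ) * (L : ℝ) * (r₂ : ℝ) := by ring
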